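/- Nonnegativity of the work quasi-probability in the commuting cases: let ρ be a density matrix and E, Π orthogonal projections on ℂⁿ. If E Π = Π E, or ρ E = E ρ, or ρ Π = Π ρ, then Re tr(ρ E Π) ≥ 0. (Hence negative values of Allahverdyan's quasi-probability require all three pairs to fail to commute.) -/

import Mathlib

open Matrix
open scoped ComplexOrder

lemma psd_trace_nonneg {n : ℕ} {M : Matrix (Fin n) (Fin n) ℂ}
    (hM : M.PosSemidef) : 0 ≤ M.trace := by
  exact hM.trace_nonneg

open scoped MatrixOrder in
lemma trace_mul_psd_nonneg {n : ℕ} {A B : Matrix (Fin n) (Fin n) ℂ}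
    (hA : A.PosSemidef) (hB : B.PosSemidef) : 0 ≤ ((A * B).trace).re := by
  have h1 : A * B = CFC.sqrt A * CFC.sqrt A * B := by rw [CFC.sqrt_mul_sqrt_self A hA.nonneg]
  have h2 : (A * B).trace = (CFC.sqrt A * B * CFC.sqrt A).trace := by
    rw [h1]
    exact (Matrix.trace_mul_cycle (CFC.sqrt A) B (CFC.sqrt A)).symm
  have h3 : (CFC.sqrt A * B * CFC.sqrt A).PosSemidef := by
    have := hB.conjTranspose_mul_mul_same (CFC.sqrt A)
    rwa [(CFC.sqrt_nonneg A).posSemidef.1.eq] at this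
  have := psd_trace_nonneg h3
  rw [h2]
  exact (Complex.le_def.mp this).1

/-- Nonnegativity of the work quasi-probability in the commuting
cases: if `ρ` is a density matrix, `E`, `P` orthogonal projections, and `E P = P E`
or `ρ E = E ρ` or `ρ P = P ρ`, then `Re tr(ρ E P) ≥ 0`. -/
theorem weak_value_nonneg_of_commuting
    (n : ℕ) (ρ E P : Matrix (Fin n) (Fin n) ℂ)
    (hρ : ρ.PosSemidef) (hρtr : ρ.trace = 1)
    (hE : E.IsHermitian) (hE2 : E * E = E)
    (hP : P.IsHermitian) (hP2 : P * P = P)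
    (hcomm : E * P = P * E ∨ ρ * E = E * ρ ∨ ρ * P = P * ρ) :
    0 ≤ (Matrix.trace (ρ * E * P)).re := by
  have hEpsd : E.PosSemidef := by
    have := (Matrix.posSemidef_conjTranspose_mul_self E)
    rwa [hE.eq, hE2] at this
  have hPpsd : P.PosSemidef := by
    have := (Matrix.posSemidef_conjTranspose_mul_self P)
    rwa [hP.eq, hP2] at this
  rcases hcomm with h | h | h
  · -- E P is PSD
    have hEP : (E * P).PosSemidef := by
      have herm : (E * P).IsHermitian := by
        rw [Matrix.IsHermitian, Matrix.conjTranspose_mul, hE.eq, hP.eq, ← h]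
      have hidem : (E * P) * (E * P) = E * P := by
        calc E * P * (E * P) = E * (P * E) * P := by noncomm_ring
        _ = E * (E * P) * P := by rw [← h]
        _ = (E * E) * (P * P) := by noncomm_ring
        _ = E * P := by rw [hE2, hP2]
      have := (Matrix.posSemidef_conjTranspose_mul_self (E * P))
      rwa [herm.eq, hidem] at this
    have : ρ * E * P = ρ * (E * P) := by rw [Matrix.mul_assoc]
    rw [this]
    exact trace_mul_psd_nonneg hρ hEP
  · -- ρ E = E ρ E is PSD
    have hρE : (ρ * E).PosSemidef := by
      have : ρ * E = Eᴴ * ρ * E := by rw [hE.eq, ← h, Matrix.mul_assoc, hE2]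
      rw [this]
      exact hρ.conjTranspose_mul_mul_same E
    have : ρ * E * P = (ρ * E) * P := rfl
    exact trace_mul_psd_nonneg hρE hPpsd
  · -- cyclic: tr(ρ E P) = tr((ρ P) E), ρ P PSD
    have hρP : (ρ * P).PosSemidef := by
      have : ρ * P = Pᴴ * ρ * P := by rw [hP.eq, ← h, Matrix.mul_assoc, hP2]
      rw [this]
      exact hρ.conjTranspose_mul_mul_same P
    have hcyc : (ρ * E * P).trace = ((ρ * P) * E).trace := by
      rw [Matrix.trace_mul_cycle, ← h]
    rw [hcyc]
    exact trace_mul_psd_nonneg hρP hEpsd
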